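/- Let δ¹ > δ² be reals in (0,1), γ > 0, and θ₀¹, θ₀² > 0 with θ₀¹ + θ₀² = 1. Define β̂_t := (θ̂₀¹(δ̂¹)^t + θ̂₀²(δ̂²)^t)^γ where δ̂ⁱ = (δⁱ)^{1/γ} and θ̂₀ⁱ = (θ₀ⁱ)^{1/γ}/((θ₀¹)^{1/γ} + (θ₀²)^{1/γ}). Then the preferences represented by (b,t) ↦ β̂_t·U(b) (for any strictly positive U on payments) are nonstationary: there exist t < t' and τ < τ' such that β̂_{t+τ}/β̂_{t+τ'} ≠ β̂_{t'+τ}/β̂_{t'+τ'}. -/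

import Mathlib

theorem stmt_15 (δ₁ δ₂ θ₁ θ₂ γ : ℝ)
    (hδ1 : 0 < δ₂) (hδ2 : δ₂ < δ₁) (hδ3 : δ₁ < 1) (hγ : 0 < γ)
    (hθ1 : 0 < θ₁) (hθ2 : 0 < θ₂) (hθsum : θ₁ + θ₂ = 1)
    (δh₁ δh₂ θh₁ θh₂ : ℝ)
    (hδh1 : δh₁ = δ₁ ^ (1 / γ)) (hδh2 : δh₂ = δ₂ ^ (1 / γ))
    (hθh1 : θh₁ = θ₁ ^ (1 / γ) / (θ₁ ^ (1 / γ) + θ₂ ^ (1 / γ)))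
    (hθh2 : θh₂ = θ₂ ^ (1 / γ) / (θ₁ ^ (1 / γ) + θ₂ ^ (1 / γ)))
    (βhat : ℕ → ℝ)
    (hβhat : ∀ t, βhat t = (θh₁ * δh₁ ^ t + θh₂ * δh₂ ^ t) ^ γ) :
    ∃ t t' τ τ' : ℕ, t < t' ∧ τ < τ' ∧
      βhat (t + τ) / βhat (t + τ') ≠ βhat (t' + τ) / βhat (t' + τ') := by
  refine ⟨0, 1, 0, 1, zero_lt_one, zero_lt_one, ?_⟩
  have hγ' : (0:ℝ) < 1 / γ := by positivity
  have ha : 0 < δh₁ := hδh1 ▸ Real.rpow_pos_of_pos (hδ1.trans hδ2) _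
  have hb : 0 < δh₂ := hδh2 ▸ Real.rpow_pos_of_pos hδ1 _
  have hab : δh₂ < δh₁ := by
    rw [hδh1, hδh2]; exact Real.rpow_lt_rpow hδ1.le hδ2 hγ'
  have hs : 0 < θ₁ ^ (1/γ) + θ₂ ^ (1/γ) := by positivity
  have hθa : 0 < θh₁ := by rw [hθh1]; positivity
  have hθb : 0 < θh₂ := by rw [hθh2]; positivity
  have hθhsum : θh₁ + θh₂ = 1 := by
    rw [hθh1, hθh2, ← add_div, div_self hs.ne']
  set f1 := θh₁ * δh₁ + θh₂ * δh₂ with hf1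
  set f2 := θh₁ * δh₁ ^ 2 + θh₂ * δh₂ ^ 2 with hf2
  have hf1pos : 0 < f1 := by positivity
  have hf2pos : 0 < f2 := by positivity
  have hd : 0 < (δh₁ - δh₂) ^ 2 := by
    have : δh₁ - δh₂ ≠ 0 := sub_ne_zero.mpr hab.ne'
    positivity
  have key : f1 ^ 2 < f2 := by
    nlinarith [mul_pos (mul_pos hθa hθb) hd]
  have hβ0 : βhat 0 = 1 := by
    rw [hβhat]; simp [hθhsum]
  have hβ1 : βhat 1 = f1 ^ γ := by rw [hβhat]; simp [hf1]
  have hβ2 : βhat 2 = f2 ^ γ := by rw [hβhat]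
  have hsq : (f1 ^ γ) ^ 2 = (f1 ^ 2) ^ γ := by
    rw [← Real.rpow_natCast (f1 ^ γ) 2, ← Real.rpow_mul hf1pos.le, mul_comm,
      Real.rpow_mul hf1pos.le, Real.rpow_natCast]
  have hlt : (f1 ^ γ) ^ 2 < f2 ^ γ := by
    rw [hsq]
    exact Real.rpow_lt_rpow (by positivity) key hγ
  have hβ1pos : 0 < βhat 1 := by rw [hβ1]; exact Real.rpow_pos_of_pos hf1pos _
  have hβ2pos : 0 < βhat 2 := by rw [hβ2]; exact Real.rpow_pos_of_pos hf2pos _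
  intro h
  simp only [Nat.add_zero, Nat.zero_add] at h
  have := (div_eq_div_iff hβ1pos.ne' hβ2pos.ne').mp h
  rw [hβ0, hβ1, hβ2] at this
  nlinarith [hlt]
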